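/- For real t ∈ (0,1), complex α with Re(α) > 0, complex β, and integer M ≥ 2, the incomplete beta function b_t(α,β) = ∫_0^t u^{α−1}(1−u)^{β−1} du satisfies b_t(α,β) = ∑_{k=1}^{M−1} (−1)^{k−1} ((1−β)_{k−1}/(α)_k) t^{α+k−1}(1−t)^{β−k} + (−1)^{M−1} ((1−β)_{M−1}/(α)_{M−1}) b_t(α+M−1, β−M+1), where (x)_k = x(x+1)···(x+k−1). -/

import Mathlib

/-- The incomplete beta function `b_t(α,β) = ∫_0^t u^{α-1}(1-u)^{β-1} du`. -/
noncomputable def incBeta (t : ℝ) (α β : ℂ) : ℂ :=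
  ∫ u in (0 : ℝ)..t, (u : ℂ) ^ (α - 1) * (1 - (u : ℂ)) ^ (β - 1)

open Complex Set in
lemma incBeta_integrable {t : ℝ} (ht0 : 0 ≤ t) (ht1 : t < 1) {α : ℂ} (hα : 0 < α.re) (β : ℂ) :
    IntervalIntegrable (fun x =>
      (x : ℂ) ^ (α - 1) * (1 - (x : ℂ)) ^ (β - 1) : ℝ → ℂ) MeasureTheory.volume 0 t := by
  apply IntervalIntegrable.mul_continuousOn
  · refine intervalIntegral.intervalIntegrable_cpow' ?_
    rwa [sub_re, one_re, ← zero_sub, sub_lt_sub_iff_right]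
  · apply continuousOn_of_forall_continuousAt
    intro x hx
    rw [uIcc_of_le ht0] at hx
    apply ContinuousAt.cpow
    · exact (continuous_const.sub continuous_ofReal).continuousAt
    · exact continuousAt_const
    · norm_cast
      exact ofReal_mem_slitPlane.2 <| by linarith only [hx.2, ht1]

open Complex Set in
lemma incBeta_step {t : ℝ} (ht0 : 0 < t) (ht1 : t < 1) {α : ℂ} (hα : 0 < α.re) (β : ℂ) :
    α * incBeta t α β = (t : ℂ) ^ α * (1 - (t : ℂ)) ^ (β - 1)
      + (β - 1) * incBeta t (α + 1) (β - 1) := by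
  let F : ℝ → ℂ := fun x => (x : ℂ) ^ α * (1 - (x : ℂ)) ^ (β - 1)
  have hα' : 0 < (α + 1).re := by rw [add_re, one_re]; positivity
  have hc : ContinuousOn F (Icc 0 t) := by
    refine (continuousOn_of_forall_continuousAt fun x hx => ?_).mul
        (continuousOn_of_forall_continuousAt fun x hx => ?_)
    · refine (continuousAt_cpow_const_of_re_pos (Or.inl ?_) hα).comp
        continuous_ofReal.continuousAt
      rw [ofReal_re]; exact hx.1
    · refine ContinuousAt.cpow ((continuous_const.sub continuous_ofReal).continuousAt)
        continuousAt_const ?_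
      norm_cast
      exact ofReal_mem_slitPlane.2 <| by linarith only [hx.2, ht1]
  have hder : ∀ x : ℝ, x ∈ Ioo (0 : ℝ) t →
      HasDerivAt F (α * ((x : ℂ) ^ (α - 1) * (1 - (x : ℂ)) ^ (β - 1)) -
        (β - 1) * ((x : ℂ) ^ α * (1 - (x : ℂ)) ^ (β - 2))) x := by
    intro x hx
    have hx1 : x < 1 := lt_trans hx.2 ht1
    have U : HasDerivAt (fun y : ℂ => y ^ α) (α * (x : ℂ) ^ (α - 1)) ↑x := by
      have := @HasDerivAt.cpow_const _ _ _ α (hasDerivAt_id (x : ℂ)) (Or.inl ?_)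
      · simpa only [id_eq, mul_one] using this
      · rw [id_eq, ofReal_re]; exact hx.1
    have V : HasDerivAt (fun y : ℂ => (1 - y) ^ (β - 1))
        (-(β - 1) * (1 - (x : ℂ)) ^ (β - 2)) ↑x := by
      have A := @HasDerivAt.cpow_const _ _ _ (β - 1) (hasDerivAt_id (1 - (x : ℂ))) (Or.inl ?_)
      swap
      · rw [id, sub_re, one_re, ofReal_re, sub_pos]; exact hx1
      simp_rw [id] at A
      have B : HasDerivAt (fun y : ℂ => 1 - y) (-1) ↑x :=
        (hasDerivAt_id _).const_sub 1
      convert HasDerivAt.comp (↑x) A B using 1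
      · rfl
      · rfl
      · rfl
      rw [show β - 1 - 1 = β - 2 by ring]
      ring
    convert (U.mul V).comp_ofReal using 1
    · rfl
    ring
  have hint2 : IntervalIntegrable (fun x : ℝ =>
      (β - 1) * ((x : ℂ) ^ α * (1 - (x : ℂ)) ^ (β - 2))) MeasureTheory.volume 0 t := by
    have := (incBeta_integrable ht0.le ht1 hα' (β - 1)).const_mul (β - 1)
    rwa [show α + 1 - 1 = α by ring, show β - 1 - 1 = β - 2 by ring] at this
  have h_int := ((incBeta_integrable ht0.le ht1 hα β).const_mul α).sub hint2
  have int_ev := intervalIntegral.integral_eq_sub_of_hasDerivAt_of_le ht0.le hc hder h_int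
  have hF0 : F 0 = 0 := by
    simp only [F, mul_eq_zero, ofReal_zero, cpow_eq_zero_iff, eq_self_iff_true, Ne,
      true_and, sub_zero, one_cpow, one_ne_zero, or_false]
    contrapose! hα; rw [hα, zero_re]
  rw [hF0, sub_zero] at int_ev
  rw [intervalIntegral.integral_sub, intervalIntegral.integral_const_mul,
    intervalIntegral.integral_const_mul] at int_ev
  · simp only [F] at int_ev
    rw [incBeta, incBeta, show α + 1 - 1 = α by ring, show β - 1 - 1 = β - 2 by ring]
    linear_combination int_ev
  · exact (incBeta_integrable ht0.le ht1 hα β).const_mul α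
  · exact hint2

open Complex in
lemma ascPochhammer_eval_ne_zero {α : ℂ} (hα : 0 < α.re) (n : ℕ) :
    (ascPochhammer ℂ n).eval α ≠ 0 := by
  rw [Ne, ascPochhammer_eval_eq_zero_iff]
  rintro ⟨k, -, hk⟩
  have : (0:ℝ) ≤ (k : ℂ).re := by simp
  rw [hk, neg_re] at this
  linarith

theorem stmt_16 (t : ℝ) (ht0 : 0 < t) (ht1 : t < 1) (α β : ℂ) (hα : 0 < α.re)
    (M : ℕ) (hM : 2 ≤ M) :
    incBeta t α β
      = ∑ k ∈ Finset.Icc 1 (M - 1), (-1 : ℂ) ^ (k - 1) *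
          ((ascPochhammer ℂ (k - 1)).eval (1 - β) / (ascPochhammer ℂ k).eval α) *
          ((t : ℂ) ^ (α + (k : ℂ) - 1) * (1 - (t : ℂ)) ^ (β - (k : ℂ)))
        + (-1 : ℂ) ^ (M - 1) *
          ((ascPochhammer ℂ (M - 1)).eval (1 - β) / (ascPochhammer ℂ (M - 1)).eval α) *
          incBeta t (α + (M : ℂ) - 1) (β - (M : ℂ) + 1) := by
  have hαne : α ≠ 0 := fun h => by simp [h] at hα
  obtain ⟨n, rfl⟩ : ∃ n, M = n + 2 := ⟨M - 2, by omega⟩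
  clear hM
  induction n with
  | zero =>
    have hstep := incBeta_step ht0 ht1 hα β
    simp only [Nat.add_eq, Nat.zero_add, Nat.cast_ofNat]
    norm_num
    rw [show α + (2:ℂ) - 1 = α + 1 by ring, show β - (2:ℂ) + 1 = β - 1 by ring]
    field_simp
    linear_combination hstep
  | succ n ih =>
    have hre : 0 < (α + (n + 2 : ℕ) - 1).re := by
      simp only [Complex.sub_re, Complex.add_re, Complex.natCast_re, Complex.one_re]
      push_cast
      linarith [Nat.cast_nonneg (α := ℝ) n]
    have hstep := incBeta_step ht0 ht1 hre (β - (n + 2 : ℕ) + 1)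
    rw [ih]
    have hsum : Finset.Icc 1 (n + 1 + 2 - 1) = insert (n + 2) (Finset.Icc 1 (n + 2 - 1)) := by
      rw [show n + 1 + 2 - 1 = (n + 2 - 1) + 1 from by omega]
      exact (Finset.insert_Icc_right_eq_Icc_add_one (by omega)).symm
    rw [hsum, Finset.sum_insert (by simp)]
    rw [add_comm (_ * _) (Finset.sum _ _), add_assoc]
    congr 1
    -- now the single-step algebra
    have hαM : (α + (n + 2 : ℕ) - 1) ≠ 0 := fun h => by rw [h] at hre; simp at hre
    have hPne : (ascPochhammer ℂ (n + 1)).eval α ≠ 0 := ascPochhammer_eval_ne_zero hα _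
    have hPne2 : (ascPochhammer ℂ (n + 2)).eval α ≠ 0 := ascPochhammer_eval_ne_zero hα _
    have hMc : ((n + 2 : ℕ) : ℂ) = (n : ℂ) + 2 := by push_cast; ring
    have hMc' : ((n + 1 + 2 : ℕ) : ℂ) = (n : ℂ) + 3 := by push_cast; ring
    have key : incBeta t (α + ((n + 2 : ℕ) : ℂ) - 1) (β - ((n + 2 : ℕ) : ℂ) + 1)
        = ((t : ℂ) ^ (α + ((n+2:ℕ) : ℂ) - 1) * (1 - (t : ℂ)) ^ (β - ((n+2:ℕ) : ℂ))
            + (β - ((n+2:ℕ):ℂ)) * incBeta t (α + ((n+1+2 : ℕ) : ℂ) - 1) (β - ((n+1+2:ℕ):ℂ) + 1))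
          / (α + ((n + 2 : ℕ) : ℂ) - 1) := by
      rw [eq_div_iff hαM, mul_comm]
      rw [incBeta_step ht0 ht1 hre (β - (n + 2 : ℕ) + 1)]
      rw [show β - ((n+2:ℕ):ℂ) + 1 - 1 = β - ((n+2:ℕ):ℂ) by ring, hMc, hMc']
      ring_nf
    rw [key]
    have hPsucc : (ascPochhammer ℂ (n + 2)).eval α
        = (ascPochhammer ℂ (n + 1)).eval α * (α + (n + 1)) := by
      rw [ascPochhammer_succ_eval]; push_cast; ring
    have hQsucc : (ascPochhammer ℂ (n + 2)).eval (1 - β)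
        = (ascPochhammer ℂ (n + 1)).eval (1 - β) * ((1 - β) + (n + 1)) := by
      rw [ascPochhammer_succ_eval]; push_cast; ring
    have h1 : (n + 2 - 1 : ℕ) = n + 1 := by omega
    have h2 : (n + 1 + 2 - 1 : ℕ) = n + 2 := by omega
    rw [h1, h2, hPsucc, hQsucc]
    have hαn1 : α + ((n : ℂ) + 1) ≠ 0 := by
      rw [hMc] at hαM; intro h; apply hαM; rw [← h]; ring
    rw [hMc, hMc']
    rw [show α + ((n:ℂ) + 2) - 1 = α + ((n:ℂ)+1) by ring] at *
    field_simp
    rw [pow_succ]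
    ring
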